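/- Fix λ with 0 < λ < π²/4. For p sufficiently close to 1 there exists t_p ∈ (0,1) with p·u_p^{p-1}(t_p) = λ, and any such choice of points satisfies t_p → 1 as p → 1⁺. -/

import Mathlib

open Real Set Filter Topology

noncomputable section

/-- `u` is the (unique) positive solution of the one-dimensional Lane–Emden problem
`-u'' = u^p` on `(-1,1)` with `u(-1) = u(1) = 0`; it is even, positive on `(-1,1)`,
decreasing on `[0,1]`, and its sup norm is attained at `0`. -/
def IsLaneEmden (p : ℝ) (u : ℝ → ℝ) : Prop :=
  ContDiff ℝ 2 u ∧
  (∀ t ∈ Ioo (-1 : ℝ) 1, deriv (deriv u) t = -(u t ^ p)) ∧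
  u (-1) = 0 ∧ u 1 = 0 ∧
  (∀ t ∈ Ioo (-1 : ℝ) 1, 0 < u t) ∧
  (∀ t : ℝ, u (-t) = u t) ∧
  (∀ ⦃s t : ℝ⦄, s ∈ Icc (0 : ℝ) 1 → t ∈ Icc (0 : ℝ) 1 → s ≤ t → u t ≤ u s) ∧
  (∀ t ∈ Icc (-1 : ℝ) 1, u t ≤ u 0)


lemma aux_diff_deriv {u : ℝ → ℝ} (hC : ContDiff ℝ 2 u) : Differentiable ℝ (deriv u) := by
  have h : ContDiff ℝ (1 + 1 : ℕ) u := by norm_num; exact hC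
  exact (contDiff_succ_iff_deriv (n := 1).mp (by exact_mod_cast h)).2.2.differentiable (by norm_num)

/-- Sturm-type bound: `u 0 ^ (p-1) ≥ π²/4`. -/
lemma sturm_bound {p : ℝ} (hp : 1 < p) {u : ℝ → ℝ} (h : IsLaneEmden p u) :
    π ^ 2 / 4 ≤ u 0 ^ (p - 1) := by
  by_contra hlt
  push_neg at hlt
  obtain ⟨hC, hode, hm1, h1, hpos, -, -, hmax⟩ := h
  set W : ℝ → ℝ := fun t =>
    deriv u t * Real.cos (π / 2 * t) + u t * (Real.sin (π / 2 * t) * (π / 2)) with hW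
  have hud : Differentiable ℝ u := hC.differentiable (by norm_num)
  have hud2 : Differentiable ℝ (deriv u) := aux_diff_deriv hC
  have hWd : ∀ t ∈ Ioo (-1 : ℝ) 1,
      HasDerivAt W (Real.cos (π / 2 * t) * (u t * (π ^ 2 / 4 - u t ^ (p - 1)))) t := by
    intro t ht
    have hlin : HasDerivAt (fun t : ℝ => π / 2 * t) (π / 2) t := by
      simpa using (hasDerivAt_id t).const_mul (π / 2)
    have hcos : HasDerivAt (fun t : ℝ => Real.cos (π / 2 * t))
        (-Real.sin (π / 2 * t) * (π / 2)) t := (Real.hasDerivAt_cos _).comp t hlin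
    have hsin : HasDerivAt (fun t : ℝ => Real.sin (π / 2 * t))
        (Real.cos (π / 2 * t) * (π / 2)) t := (Real.hasDerivAt_sin _).comp t hlin
    have hu' : HasDerivAt u (deriv u t) t := (hud t).hasDerivAt
    have hu'' : HasDerivAt (deriv u) (deriv (deriv u) t) t := (hud2 t).hasDerivAt
    have := ((hu''.mul hcos).add (hu'.mul (hsin.mul_const (π / 2))))
    refine this.congr_deriv ?_
    have hodet := hode t ht
    have hupos := hpos t ht
    have hsplit : u t ^ p = u t ^ (p - 1) * u t := by
      rw [show p = p - 1 + 1 by ring, Real.rpow_add_one hupos.ne' (p-1)]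
      ring_nf
    rw [hodet, hsplit]
    ring
  have hWc : Continuous W := by
    have h1 := hC.continuous_deriv (by norm_num)
    fun_prop
  have hmono : StrictMonoOn W (Icc (-1 : ℝ) 1) := by
    apply strictMonoOn_of_deriv_pos (convex_Icc _ _) hWc.continuousOn
    rw [interior_Icc]
    intro x hx
    rw [(hWd x hx).deriv]
    have hupos := hpos x hx
    have hcp : 0 < Real.cos (π / 2 * x) := by
      apply Real.cos_pos_of_mem_Ioo
      constructor
      · nlinarith [pi_pos, hx.1]
      · nlinarith [pi_pos, hx.2]
    have hle : u x ^ (p - 1) ≤ u 0 ^ (p - 1) :=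
      Real.rpow_le_rpow hupos.le (hmax x (Ioo_subset_Icc_self hx)) (by linarith)
    have h3 : u x ^ (p - 1) < π ^ 2 / 4 := lt_of_le_of_lt hle hlt
    exact mul_pos hcp (mul_pos hupos (by linarith))
  have hW1 : W 1 = 0 := by
    simp only [hW, mul_one, Real.cos_pi_div_two, h1, mul_zero, zero_mul, add_zero]
  have hWm1 : W (-1) = 0 := by
    have : π / 2 * (-1) = -(π / 2) := by ring
    simp only [hW, this, Real.cos_neg, Real.cos_pi_div_two, hm1, mul_zero, zero_mul, add_zero]
  have := hmono (by constructor <;> norm_num) (by constructor <;> norm_num)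
    (by norm_num : (-1 : ℝ) < 1)
  rw [hW1, hWm1] at this
  exact lt_irrefl 0 this

/-- Concavity bound: `u s ≥ (1-s) * u 0` for `s ∈ [0,1]`. -/
lemma concave_bound {p : ℝ} (hp : 1 < p) {u : ℝ → ℝ} (h : IsLaneEmden p u)
    {s : ℝ} (hs : s ∈ Icc (0 : ℝ) 1) : (1 - s) * u 0 ≤ u s := by
  obtain ⟨hC, hode, hm1, h1, hpos, -, -, -⟩ := h
  have hud : Differentiable ℝ u := hC.differentiable (by norm_num)
  have hud2 : Differentiable ℝ (deriv u) := aux_diff_deriv hC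
  have hconc : ConcaveOn ℝ (Icc (-1 : ℝ) 1) u := by
    apply concaveOn_of_deriv2_nonpos (convex_Icc _ _) hC.continuous.continuousOn
      hud.differentiableOn hud2.differentiableOn
    intro x hx
    rw [interior_Icc] at hx
    have : deriv^[2] u x = deriv (deriv u) x := by
      simp [Function.iterate_succ, Function.iterate_one]
    rw [this, hode x hx]
    have := (hpos x hx).le
    have : (0:ℝ) ≤ u x ^ p := Real.rpow_nonneg this p
    linarith
  have h0m : (0 : ℝ) ∈ Icc (-1 : ℝ) 1 := by constructor <;> norm_num
  have h1m : (1 : ℝ) ∈ Icc (-1 : ℝ) 1 := by constructor <;> norm_num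
  have := hconc.2 h0m h1m (by linarith [hs.2] : (0:ℝ) ≤ 1 - s) hs.1 (by ring)
  simpa [h1, smul_eq_mul, show (1 - s) * 0 + s * 1 = s by ring] using this

/-- For `0 < λ < π²/4` and `p` close to `1` there is `t_p ∈ (0,1)` with
`p u_p^(p-1)(t_p) = λ`, and any such points satisfy `t_p → 1` as `p → 1⁺`. -/
theorem inflection_points_tend_to_one
    (u : ℝ → ℝ → ℝ) (hu : ∀ p : ℝ, 1 < p → IsLaneEmden p (u p))
    (lam : ℝ) (hlam0 : 0 < lam) (hlam : lam < π ^ 2 / 4) :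
    (∃ δ > (0 : ℝ), ∀ p : ℝ, 1 < p → p < 1 + δ →
      ∃ t ∈ Ioo (0 : ℝ) 1, p * u p t ^ (p - 1) = lam) ∧
    (∀ ε > (0 : ℝ), ∃ δ > (0 : ℝ), ∀ p : ℝ, 1 < p → p < 1 + δ →
      ∀ t ∈ Ioo (0 : ℝ) 1, p * u p t ^ (p - 1) = lam → 1 - ε < t) := by
  constructor
  · -- existence for all p > 1
    refine ⟨1, one_pos, fun p hp _ => ?_⟩
    obtain ⟨hC, hode, hm1, h1, hpos, -, hmono, hmax⟩ := hu p hp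
    have hp1 : 0 < p - 1 := by linarith
    have hp0 : 0 < p := by linarith
    have hu0 : 0 < u p 0 := hpos 0 (by constructor <;> norm_num)
    have hsturm : π ^ 2 / 4 ≤ u p 0 ^ (p - 1) := sturm_bound hp (hu p hp)
    -- pick t1 near 1 with u p t1 small
    set c : ℝ := (lam / p) ^ (1 / (p - 1)) with hc
    have hcpos : 0 < c := Real.rpow_pos_of_pos (div_pos hlam0 hp0) _
    have hcpow : c ^ (p - 1) = lam / p := by
      rw [hc, ← Real.rpow_mul (div_pos hlam0 hp0).le, one_div_mul_cancel hp1.ne',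
        Real.rpow_one]
    obtain ⟨η, hη, hball⟩ := Metric.continuousAt_iff.mp (hC.continuous.continuousAt (x := 1))
      c hcpos
    set t1 : ℝ := max (1/2) (1 - η/2) with ht1
    have ht1lt : t1 < 1 := by
      apply max_lt (by norm_num) (by linarith)
    have ht1pos : (0:ℝ) < t1 := lt_of_lt_of_le (by norm_num) (le_max_left _ _)
    have ht1mem : t1 ∈ Icc (0:ℝ) 1 := ⟨ht1pos.le, ht1lt.le⟩
    have hut1 : u p t1 < c := by
      have : dist t1 1 < η := by
        rw [Real.dist_eq, abs_of_nonpos (by linarith)]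
        have : 1 - η/2 ≤ t1 := le_max_right _ _
        linarith
      have := hball this
      rw [Real.dist_eq, h1, sub_zero] at this
      exact lt_of_le_of_lt (le_abs_self _) this
    have hut1pos : 0 < u p t1 := hpos t1 ⟨by linarith, ht1lt⟩
    -- continuity of f on [0, t1]
    set f : ℝ → ℝ := fun t => p * u p t ^ (p - 1) with hf
    have hupos' : ∀ t ∈ Icc (0:ℝ) t1, 0 < u p t := fun t ht =>
      lt_of_lt_of_le hut1pos (hmono ⟨ht.1, le_trans ht.2 ht1lt.le⟩ ht1mem ht.2)
    have hfc : ContinuousOn f (Icc 0 t1) := by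
      intro t ht
      apply ContinuousAt.continuousWithinAt
      apply ContinuousAt.mul continuousAt_const
      exact (Real.continuousAt_rpow_const _ _ (Or.inl (hupos' t ht).ne')).comp
        hC.continuous.continuousAt
    have hft1 : f t1 < lam := by
      have h2 : u p t1 ^ (p - 1) < c ^ (p - 1) :=
        Real.rpow_lt_rpow hut1pos.le hut1 hp1
      rw [hcpow] at h2
      calc f t1 < p * (lam / p) := by
            exact mul_lt_mul_of_pos_left h2 hp0
        _ = lam := by field_simp
    have hf0 : lam < f 0 := by
      have h2 : π ^ 2 / 4 ≤ u p 0 ^ (p - 1) := hsturm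
      have h3 : u p 0 ^ (p - 1) < p * u p 0 ^ (p - 1) := by
        nlinarith [Real.rpow_pos_of_pos hu0 (p-1)]
      calc lam < π ^ 2 / 4 := hlam
        _ ≤ u p 0 ^ (p - 1) := h2
        _ < f 0 := h3
    obtain ⟨t, htmem, htval⟩ := intermediate_value_Icc' ht1pos.le hfc
      ⟨hft1.le, hf0.le⟩
    refine ⟨t, ⟨?_, lt_of_le_of_lt htmem.2 ht1lt⟩, htval⟩
    rcases eq_or_lt_of_le htmem.1 with heq | h
    · exfalso; rw [← heq] at htval; linarith
    · exact h
  · -- any such t tends to 1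
    intro ε hε
    by_cases hε1 : ε < 1
    · -- main case
      have hεpos : (0:ℝ) < ε := hε
      have hgc : ContinuousAt (fun p : ℝ => p * Real.exp (Real.log ε * (p - 1)) * (π ^ 2 / 4)) 1 := by
        fun_prop
      have hg1 : (fun p : ℝ => p * Real.exp (Real.log ε * (p - 1)) * (π ^ 2 / 4)) 1 = π ^ 2 / 4 := by
        simp
      have hev : ∀ᶠ q in 𝓝 (1:ℝ),
          lam < q * Real.exp (Real.log ε * (q - 1)) * (π ^ 2 / 4) := by
        have hlt' : lam < (fun p : ℝ => p * Real.exp (Real.log ε * (p - 1)) * (π ^ 2 / 4)) 1 := by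
          rw [hg1]; exact hlam
        exact hgc.eventually (eventually_gt_nhds hlt')
      obtain ⟨δ, hδ, hballs⟩ := Metric.eventually_nhds_iff.mp hev
      refine ⟨δ, hδ, fun p hp hpδ t ht heq => ?_⟩
      by_contra hts
      push_neg at hts
      obtain ⟨hC, hode, hm1, h1, hpos, -, hmono, hmax⟩ := hu p hp
      have hp1 : 0 < p - 1 := by linarith
      have hu0 : 0 < u p 0 := hpos 0 (by constructor <;> norm_num)
      have hsturm : π ^ 2 / 4 ≤ u p 0 ^ (p - 1) := sturm_bound hp (hu p hp)
      have hsmem : (1 - ε) ∈ Icc (0:ℝ) 1 := ⟨by linarith, by linarith⟩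
      have hconc : (1 - (1 - ε)) * u p 0 ≤ u p (1 - ε) := concave_bound hp (hu p hp) hsmem
      have hut : ε * u p 0 ≤ u p t := by
        have := hmono ⟨ht.1.le, le_trans hts hsmem.2⟩ hsmem hts
        calc ε * u p 0 = (1 - (1 - ε)) * u p 0 := by ring
          _ ≤ u p (1 - ε) := hconc
          _ ≤ u p t := this
      have hεu0 : 0 < ε * u p 0 := mul_pos hεpos hu0
      have hrp : (ε * u p 0) ^ (p - 1) ≤ u p t ^ (p - 1) :=
        Real.rpow_le_rpow hεu0.le hut hp1.le
      have hmulrp : (ε * u p 0) ^ (p - 1) = ε ^ (p - 1) * u p 0 ^ (p - 1) :=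
        Real.mul_rpow hεpos.le hu0.le
      have hεexp : ε ^ (p - 1) = Real.exp (Real.log ε * (p - 1)) :=
        Real.rpow_def_of_pos hεpos _
      have hεppos : 0 < ε ^ (p - 1) := Real.rpow_pos_of_pos hεpos _
      have hgp : lam < p * Real.exp (Real.log ε * (p - 1)) * (π ^ 2 / 4) := by
        apply hballs
        rw [Real.dist_eq, abs_of_pos (by linarith : (0:ℝ) < p - 1)]
        linarith
      rw [← hεexp] at hgp
      have hchain : p * (ε ^ (p - 1) * (π ^ 2 / 4)) ≤ p * u p t ^ (p - 1) := by
        apply mul_le_mul_of_nonneg_left _ (by linarith : (0:ℝ) ≤ p)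
        calc ε ^ (p - 1) * (π ^ 2 / 4) ≤ ε ^ (p - 1) * u p 0 ^ (p - 1) := by
              exact mul_le_mul_of_nonneg_left hsturm hεppos.le
          _ = (ε * u p 0) ^ (p - 1) := hmulrp.symm
          _ ≤ u p t ^ (p - 1) := hrp
      rw [heq] at hchain
      nlinarith
    · -- ε ≥ 1: trivial
      refine ⟨1, one_pos, fun p hp _ t ht _ => ?_⟩
      push_neg at hε1
      linarith [ht.1]
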